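/- Let D, U be (κ+1)×(κ+1) matrices with strictly positive entries such that for every j ≤ κ+1 and every cyclic sequence a_0,...,a_{j-1} in E_κ, ∏_{i=0}^{j-1} (DU)_{a_i, a_{(i+1) mod j}} = ∏_{i=0}^{j-1} (UD)_{a_i, a_{(i+1) mod j}}. Then the same identity holds for every n ≥ 1 and every cyclic sequence a_0,...,a_{n-1} in E_κ: ∏_{i=0}^{n-1} (DU)_{a_i, a_{(i+1) mod n}} = ∏_{i=0}^{n-1} (UD)_{a_i, a_{(i+1) mod n}}. -/

import Mathlib

theorem stmt_11 (κ : ℕ) (D U : Matrix (Fin (κ+1)) (Fin (κ+1)) ℝ)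
    (hD : ∀ a b, 0 < D a b) (hU : ∀ a b, 0 < U a b)
    (h : ∀ j : ℕ, j + 1 ≤ κ + 1 → ∀ a : Fin (j+1) → Fin (κ+1),
      ∏ i : Fin (j+1), (D * U) (a i) (a (i + 1))
        = ∏ i : Fin (j+1), (U * D) (a i) (a (i + 1))) :
    ∀ n : ℕ, ∀ a : Fin (n+1) → Fin (κ+1),
      ∏ i : Fin (n+1), (D * U) (a i) (a (i + 1))
        = ∏ i : Fin (n+1), (U * D) (a i) (a (i + 1)) := by
  have hDU : ∀ a b : Fin (κ+1), 0 < (D * U) a b := by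
    intro a b
    rw [Matrix.mul_apply]
    exact Finset.sum_pos (fun k _ => mul_pos (hD a k) (hU k b)) Finset.univ_nonempty
  have hUD : ∀ a b : Fin (κ+1), 0 < (U * D) a b := by
    intro a b
    rw [Matrix.mul_apply]
    exact Finset.sum_pos (fun k _ => mul_pos (hU a k) (hD k b)) Finset.univ_nonempty
  set L : Fin (κ+1) → Fin (κ+1) → ℝ :=
    fun a b => Real.log ((D*U) a b) - Real.log ((U*D) a b) with hLdef
  have h1 : ∀ b, L b b = 0 := by
    intro b
    have : (D*U) b b = (U*D) b b := by
      simpa [Fin.prod_univ_succ] using h 0 (by omega) (fun _ => b)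
    simp [hLdef, this]
  have h2 : ∀ b c : Fin (κ+1), b ≠ c → L b c + L c b = 0 := by
    intro b c hbc
    have hκ : 1 + 1 ≤ κ + 1 := by
      have h1' := b.isLt; have h2' := c.isLt
      have h3' : b.val ≠ c.val := Fin.val_ne_of_ne hbc
      omega
    have this1 : (D*U) b c * (D*U) c b = (U*D) b c * (U*D) c b := by
      simpa [Fin.prod_univ_succ] using h 1 hκ ![b, c]
    have := congrArg Real.log this1
    rw [Real.log_mul (hDU b c).ne' (hDU c b).ne',
        Real.log_mul (hUD b c).ne' (hUD c b).ne'] at this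
    simp only [hLdef]
    linarith
  have h3 : ∀ b c : Fin (κ+1), b ≠ c → b ≠ 0 → c ≠ 0 → L b c + L c 0 + L 0 b = 0 := by
    intro b c hbc hb0 hc0
    have hκ : 2 + 1 ≤ κ + 1 := by
      have h1' := b.isLt; have h2' := c.isLt
      have h3' : b.val ≠ c.val := Fin.val_ne_of_ne hbc
      have h4' : b.val ≠ 0 := Fin.val_ne_of_ne hb0
      have h5' : c.val ≠ 0 := Fin.val_ne_of_ne hc0
      omega
    have this1 : (D*U) b c * ((D*U) c 0 * (D*U) 0 b)
        = (U*D) b c * ((U*D) c 0 * (U*D) 0 b) := by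
      simpa [Fin.prod_univ_succ] using h 2 hκ ![b, c, 0]
    have := congrArg Real.log this1
    rw [Real.log_mul (hDU b c).ne' (mul_pos (hDU c 0) (hDU 0 b)).ne',
        Real.log_mul (hDU c 0).ne' (hDU 0 b).ne',
        Real.log_mul (hUD b c).ne' (mul_pos (hUD c 0) (hUD 0 b)).ne',
        Real.log_mul (hUD c 0).ne' (hUD 0 b).ne'] at this
    simp only [hLdef]
    linarith
  have key : ∀ b c : Fin (κ+1), L b c = L b 0 - L c 0 := by
    intro b c
    by_cases hbc : b = c
    · subst hbc; rw [h1]; ring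
    by_cases hc0 : c = 0
    · subst hc0; rw [h1]; ring
    by_cases hb0 : b = 0
    · subst hb0
      have := h2 c 0 hc0
      linarith [h1 (0 : Fin (κ+1))]
    · have ha := h3 b c hbc hb0 hc0
      have hb := h2 b 0 hb0
      have hc := h2 c 0 hc0
      linarith
  intro n a
  have hsum : ∑ i : Fin (n+1), L (a i) (a (i+1)) = 0 := by
    have : ∑ i : Fin (n+1), L (a i) (a (i+1))
        = ∑ i : Fin (n+1), (L (a i) 0 - L (a (i+1)) 0) := by
      exact Finset.sum_congr rfl fun i _ => key (a i) (a (i+1))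
    rw [this, Finset.sum_sub_distrib]
    have : ∑ i : Fin (n+1), L (a (i+1)) 0 = ∑ i : Fin (n+1), L (a i) 0 :=
      Fintype.sum_equiv (Equiv.addRight (1 : Fin (n+1)))
        (fun i => L (a (i+1)) 0) (fun i => L (a i) 0) (fun i => rfl)
    rw [this]; ring
  have hlog : ∑ i : Fin (n+1), Real.log ((D*U) (a i) (a (i+1)))
      = ∑ i : Fin (n+1), Real.log ((U*D) (a i) (a (i+1))) := by
    have : ∑ i : Fin (n+1), L (a i) (a (i+1))
        = ∑ i : Fin (n+1), Real.log ((D*U) (a i) (a (i+1)))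
          - ∑ i : Fin (n+1), Real.log ((U*D) (a i) (a (i+1))) := by
      rw [← Finset.sum_sub_distrib]
    linarith [hsum, this.symm]
  have hp1 : (0:ℝ) < ∏ i : Fin (n+1), (D*U) (a i) (a (i+1)) :=
    Finset.prod_pos fun i _ => hDU _ _
  have hp2 : (0:ℝ) < ∏ i : Fin (n+1), (U*D) (a i) (a (i+1)) :=
    Finset.prod_pos fun i _ => hUD _ _
  have := congrArg Real.exp hlog
  rw [← Real.log_prod (fun i _ => (hDU _ _).ne'),
      ← Real.log_prod (fun i _ => (hUD _ _).ne'),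
      Real.exp_log hp1, Real.exp_log hp2] at this
  exact this
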